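/- Let p be a prime with p ≡ 7 (mod 8), and let a_0, a_1, ..., a_{p-2} ∈ 𝔽_p be the coefficients of the unique polynomial P(T) over 𝔽_p of degree at most p-2 with P(t) = (t² + 2t + 2)^(p-2) for all nonzero t ∈ 𝔽_p. For k = 0, 1, ..., p-2 set â_k := ∏ a_j, the product over all j with 0 ≤ j ≤ p-2, j ≡ k (mod 2), and j ≠ k. Then D_p^-(2,2) ≡ 4 · (Σ_{i=0}^{(p-3)/2} â_{2i}) · (Σ_{i=0}^{(p-3)/2} â_{2i+1}) (mod p), where D_p^-(2,2) := det[(i² + 2ij + 2j²)^(p-2)]_{2 ≤ i,j ≤ p-2}. -/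

import Mathlib

open Finset

section helpers
variable {p : ℕ} [hFp : Fact p.Prime]

lemma sq1_ne (h4 : p % 4 = 3) (u : ZMod p) : u ^ 2 + 1 ≠ 0 := by
  intro h
  have hsq : IsSquare (-1 : ZMod p) := ⟨u, by linear_combination -h⟩
  rw [ZMod.exists_sq_eq_neg_one_iff] at hsq
  exact hsq h4

lemma two_ne (h4 : p % 4 = 3) : (2 : ZMod p) ≠ 0 := by
  have : (2 : ZMod p) = ((2 : ℕ) : ZMod p) := by norm_num
  rw [this, Ne, ZMod.natCast_eq_zero_iff]
  intro hd
  have := (Nat.prime_dvd_prime_iff_eq hFp.out Nat.prime_two).mp hd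
  omega

lemma sumB (h4 : p % 4 = 3) : ∑ u : ZMod p, u * (u ^ 2 + 1)⁻¹ = 0 := by
  have key : ∑ u : ZMod p, u * (u ^ 2 + 1)⁻¹ = ∑ u : ZMod p, -(u * (u ^ 2 + 1)⁻¹) :=
    Fintype.sum_equiv (Equiv.neg _) _ _ (fun u => by simp [neg_sq])
  rw [Finset.sum_neg_distrib] at key
  have h2 : (2 : ZMod p) ≠ 0 := two_ne h4
  have : (2 : ZMod p) * ∑ u : ZMod p, u * (u ^ 2 + 1)⁻¹ = 0 := by linear_combination key
  rcases mul_eq_zero.mp this with h | h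
  · exact absurd h h2
  · exact h

lemma card_cast (h : 1 ≤ p) : ((p - 1 : ℕ) : ZMod p) = -1 := by
  have h0 : ((p : ℕ) : ZMod p) = 0 := ZMod.natCast_self p
  push_cast [Nat.cast_sub h]
  rw [h0]; ring

lemma sumA (h4 : p % 4 = 3) : ∑ u : ZMod p, (u ^ 2 + 1)⁻¹ = 2⁻¹ := by
  have h2 : (2 : ZMod p) ≠ 0 := two_ne h4
  have hne := fun u : ZMod p => sq1_ne h4 u
  have hinv : ∑ u ∈ univ.erase (-1 : ZMod p), ((2 : ZMod p)⁻¹ + u * (u ^ 2 + 1)⁻¹)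
      = ∑ u ∈ univ.erase (-1 : ZMod p), (u ^ 2 + 1)⁻¹ := by
    refine Finset.sum_nbij' (fun u => (1 - u) * (1 + u)⁻¹) (fun u => (1 - u) * (1 + u)⁻¹)
      ?_ ?_ ?_ ?_ ?_
    · intro u hu
      have h1u : (1 : ZMod p) + u ≠ 0 := by
        intro h
        exact (Finset.ne_of_mem_erase hu) (by linear_combination h)
      refine Finset.mem_erase.mpr ⟨?_, Finset.mem_univ _⟩
      intro h
      field_simp at h
      exact h2 (by linear_combination h)
    · intro u hu
      have h1u : (1 : ZMod p) + u ≠ 0 := by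
        intro h
        exact (Finset.ne_of_mem_erase hu) (by linear_combination h)
      refine Finset.mem_erase.mpr ⟨?_, Finset.mem_univ _⟩
      intro h
      field_simp at h
      exact h2 (by linear_combination h)
    · intro u hu
      have h1u : (1 : ZMod p) + u ≠ 0 := by
        intro h
        exact (Finset.ne_of_mem_erase hu) (by linear_combination h)
      have hrw : 1 + (1 - u) * (1 + u)⁻¹ = 2 * (1 + u)⁻¹ := by
        field_simp
        ring
      rw [hrw]
      field_simp
      ring
    · intro u hu
      have h1u : (1 : ZMod p) + u ≠ 0 := by
        intro h
        exact (Finset.ne_of_mem_erase hu) (by linear_combination h)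
      have hrw : 1 + (1 - u) * (1 + u)⁻¹ = 2 * (1 + u)⁻¹ := by
        field_simp
        ring
      rw [hrw]
      field_simp
      ring
    · intro u hu
      have h1u : (1 : ZMod p) + u ≠ 0 := by
        intro h
        exact (Finset.ne_of_mem_erase hu) (by linear_combination h)
      rw [eq_comm]
      refine inv_eq_of_mul_eq_one_right ?_
      have hq := hne u
      field_simp
      ring
  -- now compute
  have hsplit : ∑ u : ZMod p, (u ^ 2 + 1)⁻¹
      = (∑ u ∈ univ.erase (-1 : ZMod p), (u ^ 2 + 1)⁻¹) + (((-1 : ZMod p)) ^ 2 + 1)⁻¹ := by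
    rw [Finset.sum_erase_add _ _ (Finset.mem_univ _)]
  have hBsplit : ∑ u ∈ univ.erase (-1 : ZMod p), u * (u ^ 2 + 1)⁻¹
      = (∑ u : ZMod p, u * (u ^ 2 + 1)⁻¹) - (-1) * (((-1 : ZMod p)) ^ 2 + 1)⁻¹ :=
    Finset.sum_erase_eq_sub (Finset.mem_univ _)
  have hcard : ((univ.erase (-1 : ZMod p)).card : ZMod p) = -1 := by
    rw [Finset.card_erase_of_mem (Finset.mem_univ _)]
    rw [Finset.card_univ, ZMod.card]
    exact card_cast hFp.out.one_le
  have hconst : ∑ u ∈ univ.erase (-1 : ZMod p), ((2 : ZMod p)⁻¹ + u * (u ^ 2 + 1)⁻¹)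
      = ((univ.erase (-1 : ZMod p)).card : ZMod p) * 2⁻¹
        + ∑ u ∈ univ.erase (-1 : ZMod p), u * (u ^ 2 + 1)⁻¹ := by
    rw [Finset.sum_add_distrib, Finset.sum_const, nsmul_eq_mul]
  have hB := sumB h4
  have hm1 : (((-1 : ZMod p)) ^ 2 + 1)⁻¹ = 2⁻¹ := by norm_num
  rw [hconst, hcard, hBsplit, hB, hm1] at hinv
  rw [hsplit, ← hinv, hm1]
  ring
end helpers

section more
variable {p : ℕ} [hFp : Fact p.Prime]

lemma sum_nonzero_pow (i : ℕ) :
    ∑ x ∈ (univ.erase (0 : ZMod p)), x ^ i = if (p - 1) ∣ i then -1 else 0 := by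
  have hcard : Fintype.card (ZMod p) = p := ZMod.card p
  have hu := FiniteField.sum_pow_units (ZMod p) i
  rw [hcard] at hu
  rw [← hu]
  refine Finset.sum_bij' (fun (x : ZMod p) (hx : x ∈ univ.erase 0) =>
      Units.mk0 x (Finset.ne_of_mem_erase hx)) (fun u _ => (u : ZMod p)) ?_ ?_ ?_ ?_ ?_
  · intro a ha; exact Finset.mem_univ _
  · intro u hu
    exact Finset.mem_erase.mpr ⟨u.ne_zero, Finset.mem_univ _⟩
  · intro a ha; rfl
  · intro u hu; exact Units.ext rfl
  · intro a ha; rfl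

lemma sum_univ_pow (k : ℕ) (hk : 0 < k) (hk2 : k < p - 1) :
    ∑ x : ZMod p, x ^ k = 0 := by
  have hcard : Fintype.card (ZMod p) = p := ZMod.card p
  exact FiniteField.sum_pow_lt_card_sub_one (ZMod p) k (by rw [hcard]; exact hk2)

/-- reindexing `s = (u-1)/2`, i.e. `u = 2s+1`, erase 0 ↔ erase 1 -/
lemma reindex21 (h4 : p % 4 = 3) (f : ZMod p → ZMod p) :
    ∑ s ∈ univ.erase (0 : ZMod p), f (2 * s + 1) = ∑ u ∈ univ.erase (1 : ZMod p), f u := by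
  have h2 : (2 : ZMod p) ≠ 0 := two_ne h4
  refine Finset.sum_nbij' (fun s => 2 * s + 1) (fun u => (u - 1) * 2⁻¹) ?_ ?_ ?_ ?_ ?_
  · intro s hs
    refine Finset.mem_erase.mpr ⟨?_, Finset.mem_univ _⟩
    intro h
    exact Finset.ne_of_mem_erase hs (by
      have := mul_left_cancel₀ h2 (show 2 * s = 2 * 0 by rw [mul_zero]; linear_combination h)
      exact this)
  · intro u hu
    refine Finset.mem_erase.mpr ⟨?_, Finset.mem_univ _⟩
    intro h
    apply Finset.ne_of_mem_erase hu
    have : u - 1 = 0 := by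
      have h' := congrArg (· * 2) h
      simp only [zero_mul] at h'
      calc u - 1 = (u - 1) * 2⁻¹ * 2 := by field_simp
        _ = 0 := h'
    linear_combination this
  · intro s hs
    field_simp
    ring
  · intro u hu
    field_simp
    ring
  · intro s hs; rfl

lemma sum_erase1_inv (h4 : p % 4 = 3) :
    ∑ u ∈ univ.erase (1 : ZMod p), (u ^ 2 + 1)⁻¹ = 0 := by
  rw [Finset.sum_erase_eq_sub (Finset.mem_univ _), sumA h4]
  norm_num

lemma sum_erase1_linv (h4 : p % 4 = 3) :
    ∑ u ∈ univ.erase (1 : ZMod p), u * (u ^ 2 + 1)⁻¹ = -2⁻¹ := by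
  rw [Finset.sum_erase_eq_sub (Finset.mem_univ _), sumB h4]
  norm_num

lemma T0 (h4 : p % 4 = 3) :
    ∑ s ∈ univ.erase (0 : ZMod p), (2 * s ^ 2 + 2 * s + 1)⁻¹ = 0 := by
  have h2 : (2 : ZMod p) ≠ 0 := two_ne h4
  have step : ∀ s : ZMod p,
      (2 * s ^ 2 + 2 * s + 1)⁻¹ = (fun u => 2 * (u ^ 2 + 1)⁻¹) (2 * s + 1) := by
    intro s
    have hq : (2 * s ^ 2 + 2 * s + 1 : ZMod p) ≠ 0 := by
      intro h
      exact sq1_ne h4 (2 * s + 1) (by linear_combination 2 * h)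
    have hu := sq1_ne h4 (2 * s + 1)
    simp only []
    rw [show (2 * s + 1) ^ 2 + 1 = 2 * (2 * s ^ 2 + 2 * s + 1) by ring]
    field_simp
  rw [Finset.sum_congr rfl (fun s _ => step s), reindex21 h4 (fun u => 2 * (u ^ 2 + 1)⁻¹)]
  rw [← Finset.mul_sum, sum_erase1_inv h4, mul_zero]

lemma T2 (h4 : p % 4 = 3) :
    ∑ s ∈ univ.erase (0 : ZMod p), s ^ 2 * (2 * s ^ 2 + 2 * s + 1)⁻¹ = 0 := by
  have h2 : (2 : ZMod p) ≠ 0 := two_ne h4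
  have step : ∀ s : ZMod p,
      s ^ 2 * (2 * s ^ 2 + 2 * s + 1)⁻¹
        = (fun u => 2⁻¹ - u * (u ^ 2 + 1)⁻¹) (2 * s + 1) := by
    intro s
    have hq : (2 * s ^ 2 + 2 * s + 1 : ZMod p) ≠ 0 := by
      intro h
      exact sq1_ne h4 (2 * s + 1) (by linear_combination 2 * h)
    have hu := sq1_ne h4 (2 * s + 1)
    simp only []
    rw [show (2 * s + 1) ^ 2 + 1 = 2 * (2 * s ^ 2 + 2 * s + 1) by ring]
    rw [mul_inv]
    linear_combination (2 : ZMod p)⁻¹ * mul_inv_cancel₀ hq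
      - s ^ 2 * (2 * s ^ 2 + 2 * s + 1)⁻¹ * mul_inv_cancel₀ h2
  rw [Finset.sum_congr rfl (fun s _ => step s), reindex21 h4 (fun u => 2⁻¹ - u * (u ^ 2 + 1)⁻¹)]
  simp only [Finset.sum_sub_distrib]
  rw [sum_erase1_linv h4, Finset.sum_const, nsmul_eq_mul]
  rw [Finset.card_erase_of_mem (Finset.mem_univ _), Finset.card_univ, ZMod.card,
    card_cast hFp.out.one_le]
  ring

lemma T6 (h4 : p % 4 = 3) (h7 : 7 ≤ p) :
    ∑ s ∈ univ.erase (0 : ZMod p), s ^ 6 * (2 * s ^ 2 + 2 * s + 1)⁻¹ = 0 := by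
  have h2 : (2 : ZMod p) ≠ 0 := two_ne h4
  have h32 : (32 : ZMod p) = 2 ^ 5 := by norm_num
  have h32ne : (32 : ZMod p) ≠ 0 := by rw [h32]; exact pow_ne_zero _ h2
  have step : ∀ s : ZMod p,
      s ^ 6 * (2 * s ^ 2 + 2 * s + 1)⁻¹
        = (fun u => 32⁻¹ * (8 * (u * (u ^ 2 + 1)⁻¹)
            + (u ^ 4 - 6 * u ^ 3 + 14 * u ^ 2 - 14 * u + 1))) (2 * s + 1) := by
    intro s
    have hq : (2 * s ^ 2 + 2 * s + 1 : ZMod p) ≠ 0 := by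
      intro h
      exact sq1_ne h4 (2 * s + 1) (by linear_combination 2 * h)
    have hu := sq1_ne h4 (2 * s + 1)
    simp only []
    rw [show (2 * s + 1) ^ 2 + 1 = 2 * (2 * s ^ 2 + 2 * s + 1) by ring]
    rw [eq_inv_mul_iff_mul_eq₀ h32ne, mul_inv]
    linear_combination ((2 * s + 1) ^ 4 - 6 * (2 * s + 1) ^ 3 + 14 * (2 * s + 1) ^ 2
        - 14 * (2 * s + 1) + 1) * mul_inv_cancel₀ hq
      - 4 * (2 * s + 1) * (2 * s ^ 2 + 2 * s + 1)⁻¹ * mul_inv_cancel₀ h2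
  rw [Finset.sum_congr rfl (fun s _ => step s), reindex21 h4 (fun u => 32⁻¹ * (8 * (u * (u ^ 2 + 1)⁻¹) + (u ^ 4 - 6 * u ^ 3 + 14 * u ^ 2 - 14 * u + 1)))]
  rw [← Finset.mul_sum]
  have expand : ∑ u ∈ univ.erase (1 : ZMod p),
      (8 * (u * (u ^ 2 + 1)⁻¹) + (u ^ 4 - 6 * u ^ 3 + 14 * u ^ 2 - 14 * u + 1)) = 0 := by
    rw [Finset.sum_add_distrib, ← Finset.mul_sum, sum_erase1_linv h4]
    have hpow : ∀ k, 0 < k → k < p - 1 →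
        ∑ u ∈ univ.erase (1 : ZMod p), u ^ k = -1 := by
      intro k hk hk2
      rw [Finset.sum_erase_eq_sub (Finset.mem_univ _), sum_univ_pow k hk hk2, one_pow]
      ring
    have e4 := hpow 4 (by norm_num) (by omega)
    have e3 := hpow 3 (by norm_num) (by omega)
    have e2' := hpow 2 (by norm_num) (by omega)
    have e1 := hpow 1 (by norm_num) (by omega)
    have e0 : ∑ u ∈ univ.erase (1 : ZMod p), (1 : ZMod p) = -1 := by
      rw [Finset.sum_const, nsmul_eq_mul, Finset.card_erase_of_mem (Finset.mem_univ _),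
        Finset.card_univ, ZMod.card, card_cast hFp.out.one_le]
      ring
    have epoly : ∑ u ∈ univ.erase (1 : ZMod p), (u ^ 4 - 6 * u ^ 3 + 14 * u ^ 2 - 14 * u + 1)
        = (4 : ZMod p) := by
      have : ∑ u ∈ univ.erase (1 : ZMod p), (u ^ 4 - 6 * u ^ 3 + 14 * u ^ 2 - 14 * u + 1)
          = (∑ u ∈ univ.erase (1 : ZMod p), u ^ 4)
            - 6 * (∑ u ∈ univ.erase (1 : ZMod p), u ^ 3)
            + 14 * (∑ u ∈ univ.erase (1 : ZMod p), u ^ 2)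
            - 14 * (∑ u ∈ univ.erase (1 : ZMod p), u ^ 1)
            + ∑ u ∈ univ.erase (1 : ZMod p), (1 : ZMod p) := by
        simp only [Finset.sum_add_distrib, Finset.sum_sub_distrib, Finset.mul_sum, pow_one]
      rw [this, e4, e3, e2', e1, e0]
      ring
    rw [epoly]
    have hinv2 : (2 : ZMod p) * 2⁻¹ = 1 := mul_inv_cancel₀ h2
    linear_combination (-4 : ZMod p) * hinv2
  rw [expand, mul_zero]
end more

section U
variable {p : ℕ} [hFp : Fact p.Prime]

lemma pow_sub_two_eq_inv {a : ZMod p} (ha : a ≠ 0) : a ^ (p - 2) = a⁻¹ := by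
  have h1 : a * a ^ (p - 2) = 1 := by
    rw [← pow_succ']
    have h2 : p - 2 + 1 = p - 1 := by have := hFp.out.two_le; omega
    rw [h2]
    exact ZMod.pow_card_sub_one_eq_one ha
  exact (inv_eq_of_mul_eq_one_right h1).symm

lemma reindexAdd1 (f : ZMod p → ZMod p) :
    ∑ t ∈ univ.erase (0 : ZMod p), f (t + 1) = ∑ w ∈ univ.erase (1 : ZMod p), f w := by
  refine Finset.sum_nbij' (fun t => t + 1) (fun w => w - 1) ?_ ?_ ?_ ?_ ?_
  · intro t ht
    refine Finset.mem_erase.mpr ⟨?_, Finset.mem_univ _⟩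
    intro h
    exact Finset.ne_of_mem_erase ht (by linear_combination h)
  · intro w hw
    refine Finset.mem_erase.mpr ⟨?_, Finset.mem_univ _⟩
    intro h
    exact Finset.ne_of_mem_erase hw (by linear_combination h)
  · intro t _; ring
  · intro w _; ring
  · intro t _; rfl

lemma U0 (h4 : p % 4 = 3) :
    ∑ t ∈ univ.erase (0 : ZMod p), (t ^ 2 + 2 * t + 2) ^ (p - 2) = 0 := by
  have step : ∀ t : ZMod p,
      (t ^ 2 + 2 * t + 2) ^ (p - 2) = (fun w => (w ^ 2 + 1)⁻¹) (t + 1) := by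
    intro t
    have hne : (t ^ 2 + 2 * t + 2 : ZMod p) ≠ 0 := by
      intro h; exact sq1_ne h4 (t + 1) (by linear_combination h)
    rw [pow_sub_two_eq_inv hne]
    simp only []
    congr 1; ring
  rw [Finset.sum_congr rfl (fun t _ => step t),
    reindexAdd1 (fun w => (w ^ 2 + 1)⁻¹), sum_erase1_inv h4]

lemma U4 (h4 : p % 4 = 3) (h7 : 7 ≤ p) :
    ∑ t ∈ univ.erase (0 : ZMod p), (t ^ 2 + 2 * t + 2) ^ (p - 2) * t ^ (p - 5) = 0 := by
  have key : ∑ t ∈ univ.erase (0 : ZMod p), (t ^ 2 + 2 * t + 2) ^ (p - 2) * t ^ (p - 5)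
      = ∑ s ∈ univ.erase (0 : ZMod p), s ^ 6 * (2 * s ^ 2 + 2 * s + 1)⁻¹ := by
    refine Finset.sum_nbij' (fun t => t⁻¹) (fun s => s⁻¹) ?_ ?_ ?_ ?_ ?_
    · intro t ht
      exact Finset.mem_erase.mpr ⟨inv_ne_zero (Finset.ne_of_mem_erase ht), Finset.mem_univ _⟩
    · intro s hs
      exact Finset.mem_erase.mpr ⟨inv_ne_zero (Finset.ne_of_mem_erase hs), Finset.mem_univ _⟩
    · intro t _; exact inv_inv t
    · intro s _; exact inv_inv s
    · intro t ht
      have ht0 : t ≠ 0 := Finset.ne_of_mem_erase ht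
      have hq : (t ^ 2 + 2 * t + 2 : ZMod p) ≠ 0 := by
        intro h; exact sq1_ne h4 (t + 1) (by linear_combination h)
      have hp4 : t ^ (p - 5) = (t ^ 4)⁻¹ := by
        have hmul : t ^ (p - 5) * t ^ 4 = 1 := by
          rw [← pow_add]
          have h5 : p - 5 + 4 = p - 1 := by omega
          rw [h5]
          exact ZMod.pow_card_sub_one_eq_one ht0
        exact eq_inv_of_mul_eq_one_left hmul
      rw [pow_sub_two_eq_inv hq, hp4]
      have hQ : (2 * (t⁻¹) ^ 2 + 2 * t⁻¹ + 1 : ZMod p) = (t ^ 2 + 2 * t + 2) * (t ^ 2)⁻¹ := by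
        field_simp
        ring
      rw [hQ, mul_inv, inv_inv, inv_pow]
      field_simp
  rw [key, T6 h4 h7]
end U

section coeffs
variable {p : ℕ} [hFp : Fact p.Prime]

lemma coeff_extract (P : Polynomial (ZMod p)) (hd : P.natDegree < p - 1) (m k : ℕ)
    (hk : k ∈ range (p - 1))
    (hcond : ∀ j ∈ range (p - 1), ((p - 1) ∣ (j + m) ↔ j = k)) :
    ∑ t ∈ univ.erase (0 : ZMod p), P.eval t * t ^ m = -P.coeff k := by
  have heval : ∀ t : ZMod p, P.eval t * t ^ m
      = ∑ j ∈ range (p - 1), P.coeff j * t ^ (j + m) := by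
    intro t
    rw [Polynomial.eval_eq_sum_range' hd, Finset.sum_mul]
    exact Finset.sum_congr rfl fun j _ => by rw [pow_add, mul_assoc]
  rw [Finset.sum_congr rfl fun t _ => heval t, Finset.sum_comm]
  have hterm : ∀ j ∈ range (p - 1),
      (∑ t ∈ univ.erase (0 : ZMod p), P.coeff j * t ^ (j + m))
      = if j = k then -P.coeff k else 0 := by
    intro j hj
    rw [← Finset.mul_sum, sum_nonzero_pow]
    by_cases h : j = k
    · subst h; rw [if_pos rfl, if_pos ((hcond j hj).mpr rfl)]; ring
    · rw [if_neg h, if_neg (fun hdvd => h ((hcond j hj).mp hdvd)), mul_zero]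
  rw [Finset.sum_congr rfl hterm, Finset.sum_ite_eq' (range (p - 1)) k, if_pos hk]
end coeffs

/-- Let `p ≡ 7 (mod 8)` be prime, `P` the polynomial of degree `≤ p-2` over
`𝔽_p` with `P(t) = (t² + 2t + 2)^(p-2)` for all nonzero `t`, with coefficients
`a_k = P.coeff k` for `0 ≤ k ≤ p-2`.  With
`â_k := ∏_{0 ≤ j ≤ p-2, j ≡ k (mod 2), j ≠ k} a_j`, we have
`D_p^-(2,2) ≡ 4 · (Σ_{i=0}^{(p-3)/2} â_{2i}) · (Σ_{i=0}^{(p-3)/2} â_{2i+1}) (mod p)`. -/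
theorem Dp_minus_two_two_congr (p : ℕ) (hp : p.Prime) (h : p % 8 = 7)
    (P : Polynomial (ZMod p)) (hdeg : P.degree ≤ (p - 2 : ℕ))
    (hP : ∀ t : ZMod p, t ≠ 0 → P.eval t = (t ^ 2 + 2 * t + 2) ^ (p - 2)) :
    ((Matrix.det (Matrix.of fun i j : Fin (p - 3) =>
        (((i : ℤ) + 2) ^ 2 + 2 * ((i : ℤ) + 2) * ((j : ℤ) + 2)
          + 2 * ((j : ℤ) + 2) ^ 2) ^ (p - 2)) : ℤ) : ZMod p)
      = 4 * (∑ i ∈ Finset.range ((p - 3) / 2 + 1),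
              ∏ j ∈ (Finset.range (p - 1)).filter
                (fun j => j % 2 = (2 * i) % 2 ∧ j ≠ 2 * i), P.coeff j)
          * (∑ i ∈ Finset.range ((p - 3) / 2 + 1),
              ∏ j ∈ (Finset.range (p - 1)).filter
                (fun j => j % 2 = (2 * i + 1) % 2 ∧ j ≠ 2 * i + 1), P.coeff j) := by
  haveI hF : Fact p.Prime := ⟨hp⟩
  have h7 : 7 ≤ p := by omega
  have h4 : p % 4 = 3 := by omega
  -- coefficient facts
  have hd' : P.natDegree < p - 1 := by
    have := Polynomial.natDegree_le_iff_degree_le.mpr hdeg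
    omega
  have hc0 : P.coeff 0 = 0 := by
    have hext := coeff_extract P hd' 0 0 (by rw [Finset.mem_range]; omega) ?_
    · have heq : ∑ t ∈ univ.erase (0 : ZMod p), P.eval t * t ^ 0
          = ∑ t ∈ univ.erase (0 : ZMod p), (t ^ 2 + 2 * t + 2) ^ (p - 2) := by
        refine Finset.sum_congr rfl fun t ht => ?_
        rw [pow_zero, mul_one, hP t (Finset.ne_of_mem_erase ht)]
      rw [heq, U0 h4] at hext
      exact neg_eq_zero.mp hext.symm
    · intro j hj
      rw [Finset.mem_range] at hj
      constructor
      · intro hdvd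
        rw [Nat.add_zero] at hdvd
        exact Nat.eq_zero_of_dvd_of_lt hdvd hj
      · rintro rfl; exact ⟨0, by omega⟩
  have hc4 : P.coeff 4 = 0 := by
    have hext := coeff_extract P hd' (p - 5) 4 (by rw [Finset.mem_range]; omega) ?_
    · have heq : ∑ t ∈ univ.erase (0 : ZMod p), P.eval t * t ^ (p - 5)
          = ∑ t ∈ univ.erase (0 : ZMod p), (t ^ 2 + 2 * t + 2) ^ (p - 2) * t ^ (p - 5) := by
        refine Finset.sum_congr rfl fun t ht => ?_
        rw [hP t (Finset.ne_of_mem_erase ht)]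
      rw [heq, U4 h4 h7] at hext
      exact neg_eq_zero.mp hext.symm
    · intro j hj
      rw [Finset.mem_range] at hj
      constructor
      · rintro ⟨c, hc⟩
        rcases Nat.lt_or_ge c 2 with h2c | h2c
        · interval_cases c <;> omega
        · have := Nat.mul_le_mul_left (p - 1) h2c
          omega
      · rintro rfl; exact ⟨1, by omega⟩
  -- RHS is zero
  have hS0 : (∑ i ∈ Finset.range ((p - 3) / 2 + 1),
      ∏ j ∈ (Finset.range (p - 1)).filter
        (fun j => j % 2 = (2 * i) % 2 ∧ j ≠ 2 * i), P.coeff j) = 0 := by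
    refine Finset.sum_eq_zero fun i _ => ?_
    by_cases h0 : 2 * i = 0
    · refine Finset.prod_eq_zero (i := 4) ?_ hc4
      simp only [Finset.mem_filter, Finset.mem_range]
      omega
    · refine Finset.prod_eq_zero (i := 0) ?_ hc0
      simp only [Finset.mem_filter, Finset.mem_range]
      omega
  rw [hS0, mul_zero, zero_mul]
  -- LHS is zero
  have hdet := RingHom.map_det (Int.castRingHom (ZMod p)) (Matrix.of fun i j : Fin (p - 3) =>
        (((i : ℤ) + 2) ^ 2 + 2 * ((i : ℤ) + 2) * ((j : ℤ) + 2)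
          + 2 * ((j : ℤ) + 2) ^ 2) ^ (p - 2))
  rw [show ⇑(Int.castRingHom (ZMod p)) = (Int.cast : ℤ → ZMod p) from rfl] at hdet
  rw [hdet, ← Matrix.exists_mulVec_eq_zero_iff]
  refine ⟨fun j => (((j : ℕ) : ZMod p) + 2) ^ 2 - 1, ?_, ?_⟩
  · intro hv
    have h03 : (0 : ℕ) < p - 3 := by omega
    have h3 := congrFun hv ⟨0, h03⟩
    simp only [Pi.zero_apply] at h3
    have h3' : ((3 : ℕ) : ZMod p) = 0 := by
      push_cast at h3 ⊢
      linear_combination h3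
    rw [ZMod.natCast_eq_zero_iff] at h3'
    have := Nat.le_of_dvd (by norm_num) h3'
    omega
  · funext i
    simp only [Matrix.mulVec, dotProduct, Matrix.map_apply, Matrix.of_apply,
      Pi.zero_apply]
    set a : ZMod p := ((i : ℕ) : ZMod p) + 2 with ha_def
    have hilt : (i : ℕ) + 2 < p := by have := i.isLt; omega
    have ha : a ≠ 0 := by
      rw [ha_def, show (((i : ℕ) : ZMod p) + 2) = (((i : ℕ) + 2 : ℕ) : ZMod p) by push_cast; ring,
        Ne, ZMod.natCast_eq_zero_iff]
      intro hdvd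
      have := Nat.le_of_dvd (by omega) hdvd
      omega
    set F : ZMod p → ZMod p :=
      fun x => (a ^ 2 + 2 * a * x + 2 * x ^ 2) ^ (p - 2) * (x ^ 2 - 1) with hF_def
    have hentry : ∀ x : Fin (p - 3),
        ((Int.castRingHom (ZMod p)).mapMatrix
          (Matrix.of fun i j : Fin (p - 3) =>
            (((i : ℤ) + 2) ^ 2 + 2 * ((i : ℤ) + 2) * ((j : ℤ) + 2)
              + 2 * ((j : ℤ) + 2) ^ 2) ^ (p - 2))) i x
          * ((((x : ℕ) : ZMod p) + 2) ^ 2 - 1)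
        = F (((x : ℕ) : ZMod p) + 2) := by
      intro x
      simp only [RingHom.mapMatrix_apply, Matrix.map_apply, Matrix.of_apply, map_pow, hF_def,
        ha_def, eq_intCast]
      push_cast
      ring
    rw [Finset.sum_congr rfl fun x _ => hentry x]
    -- convert to a sum over ZMod p minus {0, 1, -1}
    have hcast3 : ∀ c : ℕ, 0 < c → c < p → ((c : ℕ) : ZMod p) ≠ 0 := by
      intro c hc1 hc2 hcast
      rw [ZMod.natCast_eq_zero_iff] at hcast
      have := Nat.le_of_dvd hc1 hcast
      omega
    have himg : ∑ x : Fin (p - 3), F (((x : ℕ) : ZMod p) + 2)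
        = ∑ x ∈ (((univ.erase (0 : ZMod p)).erase 1).erase (-1)), F x := by
      refine Finset.sum_nbij' (fun j : Fin (p - 3) => (((j : ℕ) + 2 : ℕ) : ZMod p))
        (fun x : ZMod p => (⟨(x.val - 2) % (p - 3), Nat.mod_lt _ (by omega)⟩ : Fin (p - 3)))
        ?_ ?_ ?_ ?_ ?_
      · intro j _
        have hjlt := j.isLt
        refine Finset.mem_erase.mpr ⟨?_, Finset.mem_erase.mpr ⟨?_, Finset.mem_erase.mpr
          ⟨?_, Finset.mem_univ _⟩⟩⟩
        · intro hx
          apply hcast3 ((j : ℕ) + 3) (by omega) (by omega)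
          push_cast at hx ⊢
          linear_combination hx
        · intro hx
          apply hcast3 ((j : ℕ) + 1) (by omega) (by omega)
          push_cast at hx ⊢
          linear_combination hx
        · intro hx
          apply hcast3 ((j : ℕ) + 2) (by omega) (by omega)
          push_cast at hx ⊢
          linear_combination hx
      · intro x _
        exact Finset.mem_univ _
      · intro j _
        have hjlt := j.isLt
        have hval : ((((j : ℕ) + 2 : ℕ) : ZMod p)).val = (j : ℕ) + 2 :=
          ZMod.val_natCast_of_lt (by omega)
        apply Fin.ext
        simp only [hval]
        rw [Nat.add_sub_cancel, Nat.mod_eq_of_lt hjlt]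
      · intro x hx
        have hx1 : x ≠ -1 := Finset.ne_of_mem_erase hx
        have hx2 : x ≠ 1 := Finset.ne_of_mem_erase (Finset.mem_of_mem_erase hx)
        have hx3 : x ≠ 0 := Finset.ne_of_mem_erase
          (Finset.mem_of_mem_erase (Finset.mem_of_mem_erase hx))
        have hvlt : x.val < p := ZMod.val_lt x
        have hv0 : x.val ≠ 0 := fun hv => hx3 (by
          rw [← ZMod.natCast_zmod_val x, hv, Nat.cast_zero])
        have hv1 : x.val ≠ 1 := fun hv => hx2 (by
          rw [← ZMod.natCast_zmod_val x, hv, Nat.cast_one])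
        have hvp1 : x.val ≠ p - 1 := fun hv => hx1 (by
          rw [← ZMod.natCast_zmod_val x, hv, card_cast hp.one_le])
        simp only []
        rw [Nat.mod_eq_of_lt (by omega)]
        have : x.val - 2 + 2 = x.val := by omega
        rw [this, ZMod.natCast_zmod_val]
      · intro j _
        simp only [hF_def]
        push_cast
        ring_nf
    rw [himg]
    have hFm1 : F (-1) = 0 := by
      simp only [hF_def]
      norm_num
    have hF1 : F 1 = 0 := by
      simp only [hF_def]
      norm_num
    rw [Finset.sum_erase _ hFm1, Finset.sum_erase _ hF1]
    -- reindex x = a * s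
    have hre : ∑ x ∈ univ.erase (0 : ZMod p), F x
        = ∑ s ∈ univ.erase (0 : ZMod p), F (a * s) := by
      refine (Finset.sum_nbij' (fun s : ZMod p => a * s) (fun x : ZMod p => a⁻¹ * x)
        ?_ ?_ ?_ ?_ ?_).symm
      · intro s hs
        exact Finset.mem_erase.mpr ⟨mul_ne_zero ha (Finset.ne_of_mem_erase hs),
          Finset.mem_univ _⟩
      · intro x hx
        exact Finset.mem_erase.mpr ⟨mul_ne_zero (inv_ne_zero ha)
          (Finset.ne_of_mem_erase hx), Finset.mem_univ _⟩
      · intro s _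
        show a⁻¹ * (a * s) = s
        rw [← mul_assoc, inv_mul_cancel₀ ha, one_mul]
      · intro x _
        show a * (a⁻¹ * x) = x
        rw [← mul_assoc, mul_inv_cancel₀ ha, one_mul]
      · intro s _; rfl
    rw [hre]
    have hpoint : ∀ s : ZMod p, F (a * s)
        = s ^ 2 * (2 * s ^ 2 + 2 * s + 1)⁻¹ - (a ^ 2)⁻¹ * (2 * s ^ 2 + 2 * s + 1)⁻¹ := by
      intro s
      have hQ : (2 * s ^ 2 + 2 * s + 1 : ZMod p) ≠ 0 := fun hq =>
        sq1_ne h4 (2 * s + 1) (by linear_combination 2 * hq)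
      simp only [hF_def]
      have hfac : a ^ 2 + 2 * a * (a * s) + 2 * (a * s) ^ 2
          = a ^ 2 * (2 * s ^ 2 + 2 * s + 1) := by ring
      rw [hfac, pow_sub_two_eq_inv (mul_ne_zero (pow_ne_zero 2 ha) hQ)]
      field_simp
    rw [Finset.sum_congr rfl fun s _ => hpoint s, Finset.sum_sub_distrib, T2 h4,
      ← Finset.mul_sum, T0 h4, mul_zero, sub_zero]
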